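/- θ₃(q)⁴ = θ₂(q)⁴ + θ₄(q)⁴, where θ₂(q)=∑_{n∈ℤ} q^{(n+1/2)²}, θ₃(q)=∑_{n∈ℤ} q^{n²}, θ₄(q)=∑_{n∈ℤ} (-1)ⁿ q^{n²}. -/

import Mathlib

open Complex

/-- Jacobi theta null value `θ₂(q) = ∑_{n ∈ ℤ} q^((n+1/2)²)` (complex powers). -/
noncomputable def theta2 (q : ℂ) : ℂ := ∑' n : ℤ, q ^ ((((n : ℂ) + 1/2) ^ 2))

/-- Jacobi theta null value `θ₃(q) = ∑_{n ∈ ℤ} q^(n²)`. -/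
noncomputable def theta3 (q : ℂ) : ℂ := ∑' n : ℤ, q ^ (n ^ 2)

/-- Jacobi theta null value `θ₄(q) = ∑_{n ∈ ℤ} (-1)ⁿ q^(n²)`. -/
noncomputable def theta4 (q : ℂ) : ℂ := ∑' n : ℤ, (-1 : ℂ) ^ n * q ^ (n ^ 2)

/-! ### Auxiliary definitions and lemmas -/

private def Qe (p : ℤ × ℤ × ℤ × ℤ) : ℤ := p.1^2 + p.2.1^2 + p.2.2.1^2 + p.2.2.2^2
private def Sg (p : ℤ × ℤ × ℤ × ℤ) : ℤ := p.1 + p.2.1 + p.2.2.1 + p.2.2.2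

private def shearE : (ℤ × ℤ × ℤ × ℤ) × Bool ≃ ℤ × ℤ × ℤ × ℤ where
  toFun x := (x.1.1, x.1.2.1, x.1.2.2.1,
    2 * x.1.2.2.2 + (if x.2 then 1 else 0) - x.1.1 - x.1.2.1 - x.1.2.2.1)
  invFun p := ((p.1, p.2.1, p.2.2.1, (p.1 + p.2.1 + p.2.2.1 + p.2.2.2) / 2),
    decide ((p.1 + p.2.1 + p.2.2.1 + p.2.2.2) % 2 = 1))
  left_inv := by
    rintro ⟨⟨a, b, c, m⟩, t⟩
    cases t <;> simp [Prod.ext_iff] <;> omega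
  right_inv := by
    rintro ⟨a, b, c, d⟩
    by_cases h : (a + b + c + d) % 2 = 1 <;> simp [Prod.ext_iff, h] <;> omega

private def We : (ℤ × ℤ × ℤ × ℤ) ≃ ℤ × ℤ × ℤ × ℤ where
  toFun x := (x.2.2.2 + 1, x.1 + x.2.1 - x.2.2.2, x.1 + x.2.2.1 - x.2.2.2, x.1)
  invFun y := (y.2.2.2, y.2.1 + y.1 - 1 - y.2.2.2, y.2.2.1 + y.1 - 1 - y.2.2.2, y.1 - 1)
  left_inv := by rintro ⟨a, b, c, m⟩; simp [Prod.ext_iff] <;> omega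
  right_inv := by rintro ⟨a, b, c, m⟩; simp [Prod.ext_iff] <;> omega

private def Wo : (ℤ × ℤ × ℤ × ℤ) ≃ ℤ × ℤ × ℤ × ℤ where
  toFun x := (x.1 + x.2.1 + x.2.2.1 - x.2.2.2, x.2.2.2 + 1 - x.2.2.1, x.2.2.2 + 1 - x.2.1,
    x.2.2.2 + 1)
  invFun y := (y.1 + y.2.1 + y.2.2.1 - y.2.2.2 - 1, y.2.2.2 - y.2.2.1, y.2.2.2 - y.2.1,
    y.2.2.2 - 1)
  left_inv := by rintro ⟨a, b, c, m⟩; simp [Prod.ext_iff] <;> omega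
  right_inv := by rintro ⟨a, b, c, m⟩; simp [Prod.ext_iff] <;> omega

private lemma summable_pow_natAbs {r : ℝ} (h0 : 0 ≤ r) (h1 : r < 1) :
    Summable fun n : ℤ => r ^ n.natAbs := by
  apply Summable.of_nat_of_neg <;> simpa using summable_geometric_of_lt_one h0 h1

private lemma summable3 {q : ℂ} (hq : ‖q‖ < 1) :
    Summable fun n : ℤ => ‖q ^ (n ^ 2)‖ := by
  have h0 : (0 : ℝ) ≤ ‖q‖ := norm_nonneg q
  apply Summable.of_nonneg_of_le (fun n => norm_nonneg _) _ (summable_pow_natAbs h0 hq)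
  intro n
  have h1 : (n ^ 2 : ℤ) = ((n.natAbs ^ 2 : ℕ) : ℤ) := by
    push_cast
    rw [sq, sq, abs_mul_abs_self]
  rw [norm_zpow, h1, zpow_natCast]
  exact pow_le_pow_of_le_one h0 hq.le (Nat.le_self_pow two_ne_zero _)

private lemma summable2 {q : ℂ} (hq : ‖q‖ < 1) (hq0 : q ≠ 0) :
    Summable fun n : ℤ => ‖q ^ ((((n : ℂ) + 1/2) ^ 2))‖ := by
  have h0 : (0 : ℝ) < ‖q‖ := norm_pos_iff.mpr hq0
  apply Summable.of_nonneg_of_le (fun n => norm_nonneg _) _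
    ((summable_pow_natAbs h0.le hq).mul_left (‖q‖⁻¹))
  intro n
  have hw : (((n : ℂ) + 1/2) ^ 2) = ((((n : ℝ) + 1/2) ^ 2 : ℝ) : ℂ) := by push_cast; ring
  rw [hw, Complex.norm_cpow_of_ne_zero hq0]
  simp only [ofReal_re, ofReal_im, mul_zero, Real.exp_zero, div_one]
  have key : ‖q‖ ^ (((n : ℝ) + 1/2) ^ 2) ≤ ‖q‖ ^ ((n.natAbs : ℝ) - 1) := by
    apply Real.rpow_le_rpow_of_exponent_ge h0 hq.le
    have habs : ((n.natAbs : ℝ)) = |(n : ℝ)| := by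
      rw [Nat.cast_natAbs]; push_cast; ring
    rw [habs]
    rcases abs_cases ((n : ℝ)) with ⟨h, _⟩ | ⟨h, _⟩ <;> rw [h] <;> nlinarith [sq_nonneg ((n:ℝ)+1)]
  refine key.trans ?_
  rw [Real.rpow_sub h0, Real.rpow_one, Real.rpow_natCast, div_eq_inv_mul]

private lemma pow_four_tsum {f : ℤ → ℂ} (hf : Summable fun n => ‖f n‖) :
    (∑' n : ℤ, f n) ^ 4
      = ∑' p : ℤ × ℤ × ℤ × ℤ, f p.1 * (f p.2.1 * (f p.2.2.1 * f p.2.2.2)) := by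
  set g2 : ℤ × ℤ → ℂ := fun z => f z.1 * f z.2 with hg2
  set g3 : ℤ × ℤ × ℤ → ℂ := fun z => f z.1 * g2 z.2 with hg3
  set g4 : ℤ × ℤ × ℤ × ℤ → ℂ := fun z => f z.1 * g3 z.2 with hg4
  have n2 : Summable fun z => ‖g2 z‖ := hf.mul_norm hf
  have n3 : Summable fun z => ‖g3 z‖ := hf.mul_norm n2
  have e1 : (∑' n : ℤ, f n) * (∑' n : ℤ, f n) = ∑' z : ℤ × ℤ, g2 z :=
    tsum_mul_tsum_of_summable_norm hf hf
  have e2 : (∑' n : ℤ, f n) * (∑' z : ℤ × ℤ, g2 z) = ∑' z : ℤ × ℤ × ℤ, g3 z :=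
    tsum_mul_tsum_of_summable_norm hf n2
  have e3 : (∑' n : ℤ, f n) * (∑' z : ℤ × ℤ × ℤ, g3 z) = ∑' p : ℤ × ℤ × ℤ × ℤ, g4 p :=
    tsum_mul_tsum_of_summable_norm hf n3
  calc (∑' n : ℤ, f n) ^ 4
      = (∑' n : ℤ, f n) * ((∑' n : ℤ, f n) * ((∑' n : ℤ, f n) * (∑' n : ℤ, f n))) := by ring
    _ = ∑' p : ℤ × ℤ × ℤ × ℤ, g4 p := by rw [e1, e2, e3]
    _ = _ := rfl

private lemma term3_eq {q : ℂ} (hq0 : q ≠ 0) (p : ℤ × ℤ × ℤ × ℤ) :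
    q ^ (p.1 ^ 2) * (q ^ (p.2.1 ^ 2) * (q ^ (p.2.2.1 ^ 2) * q ^ (p.2.2.2 ^ 2)))
      = q ^ (Qe p) := by
  obtain ⟨a, b, c, d⟩ := p
  dsimp only
  rw [← zpow_add₀ hq0, ← zpow_add₀ hq0, ← zpow_add₀ hq0]
  congr 1
  simp only [Qe]
  ring

private lemma term4_eq {q : ℂ} (hq0 : q ≠ 0) (p : ℤ × ℤ × ℤ × ℤ) :
    ((-1 : ℂ) ^ p.1 * q ^ (p.1 ^ 2)) * (((-1 : ℂ) ^ p.2.1 * q ^ (p.2.1 ^ 2)) *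
      (((-1 : ℂ) ^ p.2.2.1 * q ^ (p.2.2.1 ^ 2)) * ((-1 : ℂ) ^ p.2.2.2 * q ^ (p.2.2.2 ^ 2))))
      = (-1 : ℂ) ^ (Sg p) * q ^ (Qe p) := by
  obtain ⟨a, b, c, d⟩ := p
  dsimp only
  have hn : (-1 : ℂ) ≠ 0 := by norm_num
  calc ((-1 : ℂ) ^ a * q ^ (a ^ 2)) * (((-1 : ℂ) ^ b * q ^ (b ^ 2)) *
      (((-1 : ℂ) ^ c * q ^ (c ^ 2)) * ((-1 : ℂ) ^ d * q ^ (d ^ 2))))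
      = ((-1 : ℂ) ^ a * ((-1 : ℂ) ^ b * ((-1 : ℂ) ^ c * (-1 : ℂ) ^ d))) *
        (q ^ (a ^ 2) * (q ^ (b ^ 2) * (q ^ (c ^ 2) * q ^ (d ^ 2)))) := by ring
    _ = (-1 : ℂ) ^ (Sg (a, b, c, d)) * q ^ (Qe (a, b, c, d)) := by
        rw [← zpow_add₀ hn, ← zpow_add₀ hn, ← zpow_add₀ hn,
          ← zpow_add₀ hq0, ← zpow_add₀ hq0, ← zpow_add₀ hq0]
        have h1 : a + (b + (c + d)) = Sg (a, b, c, d) := by simp only [Sg]; ring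
        have h2 : a ^ 2 + (b ^ 2 + (c ^ 2 + d ^ 2)) = Qe (a, b, c, d) := by
          simp only [Qe]; ring
        rw [h1, h2]

private lemma term2_eq {q : ℂ} (hq0 : q ≠ 0) (p : ℤ × ℤ × ℤ × ℤ) :
    q ^ (((p.1 : ℂ) + 1/2) ^ 2) * (q ^ (((p.2.1 : ℂ) + 1/2) ^ 2) *
      (q ^ (((p.2.2.1 : ℂ) + 1/2) ^ 2) * q ^ (((p.2.2.2 : ℂ) + 1/2) ^ 2)))
      = q ^ (Qe p + Sg p + 1) := by
  obtain ⟨a, b, c, d⟩ := p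
  dsimp only
  rw [← Complex.cpow_add _ _ hq0, ← Complex.cpow_add _ _ hq0, ← Complex.cpow_add _ _ hq0]
  have h : ((a : ℂ) + 1/2) ^ 2 + (((b : ℂ) + 1/2) ^ 2 + (((c : ℂ) + 1/2) ^ 2
      + ((d : ℂ) + 1/2) ^ 2)) = ((Qe (a, b, c, d) + Sg (a, b, c, d) + 1 : ℤ) : ℂ) := by
    simp only [Qe, Sg]
    push_cast
    ring
  rw [h, Complex.cpow_intCast]

private lemma split_parity {F : ℤ × ℤ × ℤ × ℤ → ℂ} (hF : Summable F) :
    ∑' p : ℤ × ℤ × ℤ × ℤ, F p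
      = (∑' y : ℤ × ℤ × ℤ × ℤ, F (shearE (y, false)))
        + ∑' y : ℤ × ℤ × ℤ × ℤ, F (shearE (y, true)) := by
  have hcomp : Summable (fun x : (ℤ × ℤ × ℤ × ℤ) × Bool => F (shearE x)) :=
    hF.comp_injective shearE.injective
  have hfalse : Summable (fun y : ℤ × ℤ × ℤ × ℤ => F (shearE (y, false))) :=
    hcomp.comp_injective (fun a b h => congrArg Prod.fst h)
  have htrue : Summable (fun y : ℤ × ℤ × ℤ × ℤ => F (shearE (y, true))) :=
    hcomp.comp_injective (fun a b h => congrArg Prod.fst h)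
  rw [← shearE.tsum_eq F, hcomp.tsum_prod]
  rw [tsum_congr (fun y => tsum_bool (fun t => F (shearE (y, t))))]
  exact hfalse.tsum_add htrue

private lemma core {q : ℂ}
    (hA : Summable fun p : ℤ × ℤ × ℤ × ℤ => q ^ (Qe p + Sg p + 1))
    (hQ : Summable fun p : ℤ × ℤ × ℤ × ℤ => q ^ (Qe p))
    (h4 : Summable fun p : ℤ × ℤ × ℤ × ℤ => (-1 : ℂ) ^ (Sg p) * q ^ (Qe p)) :
    ∑' p : ℤ × ℤ × ℤ × ℤ, q ^ (Qe p + Sg p + 1)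
      = (∑' p : ℤ × ℤ × ℤ × ℤ, q ^ (Qe p))
        - ∑' p : ℤ × ℤ × ℤ × ℤ, (-1 : ℂ) ^ (Sg p) * q ^ (Qe p) := by
  have hB : Summable fun p : ℤ × ℤ × ℤ × ℤ =>
      q ^ (Qe p) - (-1 : ℂ) ^ (Sg p) * q ^ (Qe p) := hQ.sub h4
  have hEv : ∑' y : ℤ × ℤ × ℤ × ℤ,
      q ^ (Qe (shearE (y, false)) + Sg (shearE (y, false)) + 1)
      = ∑' y : ℤ × ℤ × ℤ × ℤ, q ^ (Qe (shearE (y, true))) := by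
    rw [← We.tsum_eq (fun y => q ^ (Qe (shearE (y, true))))]
    refine tsum_congr fun y => ?_
    obtain ⟨a, b, c, m⟩ := y
    congr 1
    simp [shearE, We, Qe, Sg]
    ring
  have hOd : ∑' y : ℤ × ℤ × ℤ × ℤ,
      q ^ (Qe (shearE (y, true)) + Sg (shearE (y, true)) + 1)
      = ∑' y : ℤ × ℤ × ℤ × ℤ, q ^ (Qe (shearE (y, true))) := by
    rw [← Wo.tsum_eq (fun y => q ^ (Qe (shearE (y, true))))]
    refine tsum_congr fun y => ?_
    obtain ⟨a, b, c, m⟩ := y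
    congr 1
    simp [shearE, Wo, Qe, Sg]
    ring
  have hz : ∑' y : ℤ × ℤ × ℤ × ℤ,
      (q ^ (Qe (shearE (y, false)))
        - (-1 : ℂ) ^ (Sg (shearE (y, false))) * q ^ (Qe (shearE (y, false))))
      = 0 := by
    rw [tsum_congr (fun y => ?_), tsum_zero]
    have he : Even (Sg (shearE (y, false))) := by
      obtain ⟨a, b, c, m⟩ := y
      exact ⟨m - a - b - c + (a + b + c), by simp [shearE, Sg] <;> ring⟩
    rw [he.neg_one_zpow, one_mul, sub_self]
  have h2 : ∑' y : ℤ × ℤ × ℤ × ℤ,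
      (q ^ (Qe (shearE (y, true)))
        - (-1 : ℂ) ^ (Sg (shearE (y, true))) * q ^ (Qe (shearE (y, true))))
      = 2 * ∑' y : ℤ × ℤ × ℤ × ℤ, q ^ (Qe (shearE (y, true))) := by
    rw [← tsum_mul_left]
    refine tsum_congr fun y => ?_
    have ho : Odd (Sg (shearE (y, true))) := by
      obtain ⟨a, b, c, m⟩ := y
      exact ⟨m, by simp [shearE, Sg] <;> ring⟩
    rw [ho.neg_one_zpow]
    ring
  rw [← hQ.tsum_sub h4, split_parity hA, split_parity hB]
  rw [hEv, hOd, hz, h2]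
  ring

/-- `θ₃(q)⁴ = θ₂(q)⁴ + θ₄(q)⁴`. -/
theorem theta3_pow_four (q : ℂ) (hq : ‖q‖ < 1) :
    theta3 q ^ 4 = theta2 q ^ 4 + theta4 q ^ 4 := by
  rcases eq_or_ne q 0 with rfl | hq0
  · have h2 : theta2 0 = 0 := by
      rw [theta2]
      have hterm : ∀ n : ℤ, (0 : ℂ) ^ ((((n : ℂ) + 1/2) ^ 2)) = 0 := by
        intro n
        apply zero_cpow
        apply pow_ne_zero
        intro h
        have h' : ((2 * n + 1 : ℤ) : ℂ) = 0 := by push_cast; linear_combination 2 * h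
        have : (2 * n + 1 : ℤ) = 0 := by exact_mod_cast h'
        omega
      rw [tsum_congr hterm, tsum_zero]
    have h3 : theta3 0 = 1 := by
      rw [theta3, tsum_eq_single 0 (fun b hb => zero_zpow _ (pow_ne_zero 2 hb))]
      norm_num
    have h4 : theta4 0 = 1 := by
      rw [theta4, tsum_eq_single 0
        (fun b hb => by rw [zero_zpow _ (pow_ne_zero 2 hb), mul_zero])]
      norm_num
    rw [h2, h3, h4]
    norm_num
  · have hS3 := summable3 hq
    have hS2 := summable2 hq hq0
    have hS4 : Summable fun n : ℤ => ‖(-1 : ℂ) ^ n * q ^ (n ^ 2)‖ := by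
      refine hS3.congr fun n => ?_
      simp [norm_mul, norm_zpow]
    have hQ : Summable fun p : ℤ × ℤ × ℤ × ℤ => q ^ (Qe p) :=
      ((hS3.mul_norm (hS3.mul_norm (hS3.mul_norm hS3))).of_norm).congr
        (fun p => term3_eq hq0 p)
    have h4s : Summable fun p : ℤ × ℤ × ℤ × ℤ => (-1 : ℂ) ^ (Sg p) * q ^ (Qe p) :=
      ((hS4.mul_norm (hS4.mul_norm (hS4.mul_norm hS4))).of_norm).congr
        (fun p => term4_eq hq0 p)
    have hA : Summable fun p : ℤ × ℤ × ℤ × ℤ => q ^ (Qe p + Sg p + 1) :=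
      ((hS2.mul_norm (hS2.mul_norm (hS2.mul_norm hS2))).of_norm).congr
        (fun p => term2_eq hq0 p)
    have L1 : theta3 q ^ 4 = ∑' p : ℤ × ℤ × ℤ × ℤ, q ^ (Qe p) := by
      rw [theta3, pow_four_tsum hS3]
      exact tsum_congr (term3_eq hq0)
    have L2 : theta4 q ^ 4 = ∑' p : ℤ × ℤ × ℤ × ℤ, (-1 : ℂ) ^ (Sg p) * q ^ (Qe p) := by
      rw [theta4, pow_four_tsum hS4]
      exact tsum_congr (term4_eq hq0)
    have L3 : theta2 q ^ 4 = ∑' p : ℤ × ℤ × ℤ × ℤ, q ^ (Qe p + Sg p + 1) := by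
      rw [theta2, pow_four_tsum hS2]
      exact tsum_congr (term2_eq hq0)
    rw [L1, L2, L3, core hA hQ h4s]
    ring
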